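/- Let μ be a Borel probability measure on ℝⁿ with 0 in the interior of conv(supp(μ)). There exists c > 0 (depending only on μ) such that: for any proper convex μ-integrable function ψ: ℝⁿ → ℝ ∪ {+∞} with ψ(0) = inf ψ and ∫ ψ dμ < 0, setting α = −ψ(0) > 0, one has ψ(x) ≤ −α/2 for all |x| < c. -/

import Mathlib

open MeasureTheory Filter
open scoped ENNReal RealInnerProductSpace

noncomputable section

abbrev En (n : ℕ) := EuclideanSpace ℝ (Fin n)

/-- Legendre transform of an `EReal`-valued function: `ψ*(y) = sup_{x ∈ dom ψ} (⟨x,y⟩ - ψ x)`. -/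
def legendre {n : ℕ} (ψ : En n → EReal) (y : En n) : EReal :=
  ⨆ x : {x : En n // ψ x < ⊤}, ((⟪x.1, y⟫ : ℝ) : EReal) - ψ x.1

/-- Convexity for `ℝ ∪ {+∞}`-valued functions. -/
def EConvexOn {n : ℕ} (ψ : En n → EReal) : Prop :=
  ∀ x y : En n, ∀ a b : ℝ, 0 ≤ a → 0 ≤ b → a + b = 1 →
    ψ (a • x + b • y) ≤ (a : EReal) * ψ x + (b : EReal) * ψ y

/-- `t ^ (-s)` with the conventions `0^(-s) = ∞`, `∞^(-s) = 0` (for `s > 0`). -/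
def negPow (t : EReal) (s : ℝ) : ℝ≥0∞ :=
  if t = ⊤ then 0 else if t ≤ 0 then ⊤ else ENNReal.ofReal (t.toReal ^ (-s))

/-- `I_p(ψ) = (∫ (ψ*)^{-(n+p)})^{-1/p} ∈ [0,∞]`. -/
def Ip (n : ℕ) (p : ℝ) (ψ : En n → EReal) : ℝ≥0∞ :=
  (∫⁻ x, negPow (legendre ψ x) ((n : ℝ) + p)) ^ (-(1 : ℝ) / p)

/-- The support of a Borel measure: points all of whose open neighborhoods have positive
measure. -/
def msupport {n : ℕ} (μ : Measure (En n)) : Set (En n) :=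
  {x | ∀ U : Set (En n), IsOpen U → x ∈ U → 0 < μ U}

lemma exists_c12 {n : ℕ} (μ : Measure (En n)) [IsProbabilityMeasure μ]
    (hmom : Integrable (fun x : En n => ‖x‖) μ)
    (h0 : (0 : En n) ∈ interior (convexHull ℝ (msupport μ))) :
    ∃ c₁ > (0:ℝ), ∃ c₂ > (0:ℝ), ∀ θ : En n, ‖θ‖ = 1 →
      c₂ ≤ ∫ x, max (⟪x, θ⟫ - c₁) 0 ∂μ := by
  obtain ⟨δ, hδ, hball⟩ := Metric.mem_nhds_iff.mp (mem_interior_iff_mem_nhds.mp h0)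
  set c₁ : ℝ := δ/4 with hc₁def
  have hc₁ : 0 < c₁ := by positivity
  set g : En n → En n → ℝ := fun θ x => max (⟪x, θ⟫ - c₁) 0 with hg
  have hgc : ∀ θ : En n, Continuous (g θ) := fun θ =>
    ((continuous_id.inner continuous_const).sub continuous_const).max continuous_const
  have hgint : ∀ θ : En n, Integrable (g θ) μ := by
    intro θ
    refine (hmom.mul_const ‖θ‖).mono' (hgc θ).aestronglyMeasurable
      (Eventually.of_forall fun x => ?_)
    have h1 : |⟪x, θ⟫| ≤ ‖x‖ * ‖θ‖ := abs_real_inner_le_norm x θ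
    show ‖max (⟪x, θ⟫ - c₁) 0‖ ≤ ‖x‖ * ‖θ‖
    rw [Real.norm_eq_abs, abs_of_nonneg (le_max_right _ _)]
    rcases le_or_gt (⟪x, θ⟫ - c₁) 0 with h | h
    · rw [max_eq_right h]; positivity
    · rw [max_eq_left h.le]
      nlinarith [abs_le.mp h1]
  set F : En n → ℝ := fun θ => ∫ x, g θ x ∂μ with hF
  have hFpos : ∀ θ : En n, ‖θ‖ = 1 → 0 < F θ := by
    intro θ hθ
    have hy : ∃ y ∈ msupport μ, c₁ < ⟪y, θ⟫ := by
      by_contra h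
      push_neg at h
      have hsub : convexHull ℝ (msupport μ) ⊆ {w : En n | ⟪w, θ⟫ ≤ c₁} :=
        convexHull_min (fun y hy => h y hy)
          (convex_halfSpace_le
            ⟨fun a b => inner_add_left a b θ, fun r a => real_inner_smul_left a θ r⟩ c₁)
      have hmem : ((δ/2) • θ : En n) ∈ Metric.ball (0 : En n) δ := by
        rw [Metric.mem_ball, dist_zero_right, norm_smul, hθ, mul_one, Real.norm_eq_abs,
          abs_of_pos (by positivity : (0:ℝ) < δ/2)]
        linarith
      have h2 := hsub (hball hmem)
      have h3 : ⟪((δ/2) • θ : En n), θ⟫ = δ/2 := by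
        rw [real_inner_smul_left, real_inner_self_eq_norm_sq, hθ]; ring
      rw [Set.mem_setOf_eq, h3, hc₁def] at h2
      linarith
    obtain ⟨y, hymem, hyθ⟩ := hy
    set ε : ℝ := (⟪y, θ⟫ - c₁)/2 with hε
    have hεpos : 0 < ε := by rw [hε]; linarith
    set U : Set (En n) := {x : En n | c₁ + ε < ⟪x, θ⟫} with hU
    have hUopen : IsOpen U := isOpen_lt continuous_const (continuous_id.inner continuous_const)
    have hyU : y ∈ U := by
      show c₁ + ε < ⟪y, θ⟫
      rw [hε]; linarith
    have hμU : 0 < μ U := hymem U hUopen hyU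
    have hμUlt : μ U < ⊤ := lt_of_le_of_lt prob_le_one (by norm_num)
    have hind : Integrable (U.indicator (fun _ => ε)) μ :=
      (integrable_const ε).indicator hUopen.measurableSet
    have hle : ∀ x, U.indicator (fun _ => ε) x ≤ g θ x := by
      intro x
      by_cases hx : x ∈ U
      · rw [Set.indicator_of_mem hx]
        have : c₁ + ε < ⟪x, θ⟫ := hx
        exact le_max_of_le_left (by linarith)
      · rw [Set.indicator_of_notMem hx]; exact le_max_right _ _
    have h1 : ∫ x, U.indicator (fun _ => ε) x ∂μ ≤ F θ :=
      integral_mono hind (hgint θ) hle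
    have h2 : ∫ x, U.indicator (fun _ => ε) x ∂μ = (μ U).toReal * ε := by
      rw [integral_indicator_const ε hUopen.measurableSet]; simp [smul_eq_mul, Measure.real]
    have h3 : 0 < (μ U).toReal * ε :=
      mul_pos (ENNReal.toReal_pos hμU.ne' hμUlt.ne) hεpos
    rw [h2] at h1
    linarith
  have hFcont : Continuous F := by
    set M : ℝ := ∫ x, ‖x‖ ∂μ with hM
    have hM0 : 0 ≤ M := integral_nonneg fun x => norm_nonneg x
    apply LipschitzWith.continuous (K := Real.toNNReal M)
    apply LipschitzWith.of_dist_le_mul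
    intro θ θ'
    rw [Real.dist_eq, dist_eq_norm, Real.coe_toNNReal M hM0]
    have hsub : F θ - F θ' = ∫ x, (g θ x - g θ' x) ∂μ :=
      (integral_sub (hgint θ) (hgint θ')).symm
    rw [hsub]
    calc |∫ x, (g θ x - g θ' x) ∂μ| ≤ ∫ x, |g θ x - g θ' x| ∂μ :=
          by simpa [Real.norm_eq_abs] using
            norm_integral_le_integral_norm (μ := μ) (fun x => g θ x - g θ' x)
      _ ≤ ∫ x, ‖x‖ * ‖θ - θ'‖ ∂μ := by
          apply integral_mono ((hgint θ).sub (hgint θ')).abs (hmom.mul_const _)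
          intro x
          calc |g θ x - g θ' x| ≤ |(⟪x, θ⟫ - c₁) - (⟪x, θ'⟫ - c₁)| :=
                abs_max_sub_max_le_abs _ _ _
            _ = |⟪x, θ - θ'⟫| := by rw [inner_sub_right]; ring_nf
            _ ≤ ‖x‖ * ‖θ - θ'‖ := abs_real_inner_le_norm x _
      _ = M * ‖θ - θ'‖ := integral_mul_const _ _
  by_cases hne : (Metric.sphere (0 : En n) 1).Nonempty
  · obtain ⟨θ₀, hθ₀mem, hmin⟩ :=
      (isCompact_sphere (0 : En n) 1).exists_isMinOn hne hFcont.continuousOn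
    refine ⟨c₁, hc₁, F θ₀, hFpos θ₀ (by simpa using hθ₀mem), fun θ hθ => ?_⟩
    exact hmin (by simpa using hθ)
  · refine ⟨c₁, hc₁, 1, one_pos, fun θ hθ => absurd ⟨θ, ?_⟩ hne⟩
    simpa using hθ

theorem statement6 {n : ℕ} (μ : Measure (En n)) [IsProbabilityMeasure μ]
    (hmom : Integrable (fun x : En n => ‖x‖) μ)
    (h0 : (0 : En n) ∈ interior (convexHull ℝ (msupport μ))) :
    ∃ c > (0 : ℝ), ∀ ψ : En n → EReal,
      EConvexOn ψ → LowerSemicontinuous ψ → (∀ x, ψ x ≠ ⊥) → (∃ x, ψ x ≠ ⊤) →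
      Integrable (fun x => (ψ x).toReal) μ → (∀ᵐ x ∂μ, ψ x ≠ ⊤) →
      (∀ x, ψ 0 ≤ ψ x) → (∫ x, (ψ x).toReal ∂μ) < 0 →
      ∀ x : En n, ‖x‖ < c → ψ x ≤ (((ψ 0).toReal / 2 : ℝ) : EReal) := by
  obtain ⟨c₁, hc₁, c₂, hc₂, hF⟩ := exists_c12 μ hmom h0
  set c : ℝ := min c₁ (c₂/4) with hcdef
  have hc : 0 < c := lt_min hc₁ (by positivity)
  have hcc₁ : c ≤ c₁ := min_le_left _ _
  have hcc₂ : c ≤ c₂/4 := min_le_right _ _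
  clear_value c
  refine ⟨c, hc, fun ψ hconv hlsc hbot hex hint hae hmin hneg x₀ hx₀ => ?_⟩
  obtain ⟨xT, hxT⟩ := hex
  by_contra hcon
  -- basic facts about ψ 0
  have hψ0top : ψ 0 ≠ ⊤ := fun h => hxT (top_le_iff.mp (h ▸ hmin xT))
  set a : ℝ := (ψ 0).toReal with hadef
  have hψ0 : ψ 0 = (a : EReal) := (EReal.coe_toReal hψ0top (hbot 0)).symm
  -- a.e. lower bound by a, hence a ≤ ∫ ψ < 0
  have haebound : ∀ᵐ x ∂μ, a ≤ (ψ x).toReal := by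
    filter_upwards [hae] with x hx
    have h := hmin x
    rw [hψ0] at h
    simpa [hadef] using EReal.toReal_le_toReal h (by simp) hx
  have haint : a ≤ ∫ x, (ψ x).toReal ∂μ := by
    have := integral_mono_ae (integrable_const a) hint haebound
    simpa using this
  have ha : a < 0 := lt_of_le_of_lt haint hneg
  clear_value a
  -- the sublevel set K
  set K : Set (En n) := {x | ψ x ≤ ((a/2 : ℝ) : EReal)} with hK
  have hKmem : ∀ {x : En n}, x ∈ K → ψ x ≤ ((a/2 : ℝ) : EReal) := fun hx => hx
  have hKconv : Convex ℝ K := by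
    intro x hx y hy p q hp hq hpq
    have hxtop : ψ x ≠ ⊤ := fun h => by
      have h2 := hKmem hx; rw [h] at h2; exact EReal.coe_ne_top _ (top_le_iff.mp h2)
    have hytop : ψ y ≠ ⊤ := fun h => by
      have h2 := hKmem hy; rw [h] at h2; exact EReal.coe_ne_top _ (top_le_iff.mp h2)
    have hxr : ψ x = (((ψ x).toReal : ℝ) : EReal) := (EReal.coe_toReal hxtop (hbot x)).symm
    have hyr : ψ y = (((ψ y).toReal : ℝ) : EReal) := (EReal.coe_toReal hytop (hbot y)).symm
    have hx' : (ψ x).toReal ≤ a/2 := by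
      have := hKmem hx; rw [hxr] at this; exact_mod_cast this
    have hy' : (ψ y).toReal ≤ a/2 := by
      have := hKmem hy; rw [hyr] at this; exact_mod_cast this
    have h1 := hconv x y p q hp hq hpq
    rw [hxr, hyr] at h1
    show ψ (p • x + q • y) ≤ ((a/2 : ℝ) : EReal)
    refine le_trans h1 ?_
    have e : (p : EReal) * ((ψ x).toReal : EReal) + (q : EReal) * ((ψ y).toReal : EReal)
        = ((p * (ψ x).toReal + q * (ψ y).toReal : ℝ) : EReal) := by norm_cast
    rw [e]
    exact_mod_cast (by nlinarith : p * (ψ x).toReal + q * (ψ y).toReal ≤ a/2)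
  have hKclosed : IsClosed K := hlsc.isClosed_preimage ((a/2 : ℝ) : EReal)
  have h0K : (0 : En n) ∈ K := by
    show ψ 0 ≤ ((a/2 : ℝ) : EReal)
    rw [hψ0]
    exact_mod_cast (by linarith : a ≤ a/2)
  have hx₀K : x₀ ∉ K := hcon
  -- separation
  obtain ⟨f, u, hfu, hux₀⟩ := geometric_hahn_banach_closed_point hKconv hKclosed hx₀K
  set v : En n := (InnerProductSpace.toDual ℝ (En n)).symm f with hv
  have hfv : ∀ z : En n, f z = ⟪v, z⟫ := fun z => (InnerProductSpace.toDual_symm_apply).symm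
  have hu0 : 0 < u := by
    have := hfu 0 h0K
    rwa [map_zero] at this
  have hvne : v ≠ 0 := by
    intro h
    have := hux₀
    rw [hfv x₀, h, inner_zero_left] at this
    linarith
  have hvpos : 0 < ‖v‖ := norm_pos_iff.mpr hvne
  set θ : En n := ‖v‖⁻¹ • v with hθdef
  have hθ : ‖θ‖ = 1 := norm_smul_inv_norm hvne
  have hinner : ∀ z : En n, ⟪z, θ⟫ = ⟪v, z⟫ / ‖v‖ := by
    intro z
    rw [hθdef, real_inner_comm, real_inner_smul_left]
    ring
  -- u < ‖v‖ * c
  have hβ : u < ‖v‖ * c := by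
    have h1 : f x₀ ≤ ‖v‖ * ‖x₀‖ := by rw [hfv]; exact real_inner_le_norm v x₀
    have h2 : ‖v‖ * ‖x₀‖ < ‖v‖ * c := by
      exact mul_lt_mul_of_pos_left hx₀ hvpos
    linarith
  -- points z with ⟪z,θ⟫ ≥ c are not in K
  have houtside : ∀ z : En n, c ≤ ⟪z, θ⟫ → ((a/2 : ℝ) : EReal) < ψ z := by
    intro z hz
    have h1 : ‖v‖ * c ≤ f z := by
      rw [hfv]
      have h2 : c ≤ ⟪v, z⟫ / ‖v‖ := (hinner z) ▸ hz
      have h3 := (le_div_iff₀ hvpos).mp h2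
      linarith [h3]
    have hzK : z ∉ K := fun hmem => by
      have := hfu z hmem
      linarith
    exact lt_of_not_ge hzK
  -- the growth bound
  set L : ℝ := -a / (2 * c) with hLdef
  have hL0 : 0 < L := by
    apply div_pos (by linarith) (by linarith)
  have hL : L * (2 * c) = -a := div_mul_cancel₀ _ (by positivity)
  clear_value L
  set G : En n → ℝ := fun x => a + L * max (⟪x, θ⟫ - c₁) 0 with hG
  have hGbound : ∀ᵐ x ∂μ, G x ≤ (ψ x).toReal := by
    filter_upwards [hae, haebound] with x hxtop hxa
    show a + L * max (⟪x, θ⟫ - c₁) 0 ≤ (ψ x).toReal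
    rcases le_or_gt (⟪x, θ⟫) c₁ with h | h
    · rw [max_eq_right (by linarith)]
      simpa using hxa
    · obtain ⟨t, ht⟩ : ∃ t : ℝ, ⟪x, θ⟫ = t := ⟨_, rfl⟩
      rw [ht] at h ⊢
      have ht0 : 0 < t := by linarith
      have htc : c < t := lt_of_le_of_lt hcc₁ h
      set lam : ℝ := c / t with hlam
      have hlam0 : 0 < lam := div_pos hc ht0
      have hlam1 : lam < 1 := (div_lt_one ht0).mpr htc
      clear_value lam
      have hzin : ⟪lam • x, θ⟫ = c := by
        rw [real_inner_smul_left, ht, hlam, div_mul_cancel₀ c ht0.ne']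
      have hz2 : ((a/2 : ℝ) : EReal) < ψ (lam • x) := houtside _ (le_of_eq hzin.symm)
      have hcv := hconv x 0 lam (1 - lam) hlam0.le (by linarith) (by ring)
      rw [smul_zero, add_zero, hψ0] at hcv
      set r : ℝ := (ψ x).toReal with hr
      have hxr : ψ x = (r : EReal) := (EReal.coe_toReal hxtop (hbot x)).symm
      clear_value r
      rw [hxr] at hcv
      have e : (lam : EReal) * (r : EReal) + ((1 - lam : ℝ) : EReal) * (a : EReal)
          = ((lam * r + (1 - lam) * a : ℝ) : EReal) := by norm_cast
      rw [e] at hcv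
      have key : a/2 < lam * r + (1 - lam) * a := by
        exact_mod_cast lt_of_lt_of_le hz2 hcv
      have key2 : t * (a/2) < c * r + (t - c) * a := by
        have h' := mul_lt_mul_of_pos_left key ht0
        have e1 : t * (lam * r + (1 - lam) * a) = c * r + (t - c) * a := by
          rw [hlam]; field_simp
        rw [e1] at h'
        exact h'
      rw [max_eq_left (by linarith)]
      have hLc : L * c = -a/2 := by linarith [hL]
      have e2 : L * t * c = t * (-a/2) := by rw [← hLc]; ring
      have hstep : t * (-a/2) < c * (r - a) := by nlinarith [key2]
      have hrt : L * t < r - a := by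
        have h4 : (L * t) * c < (r - a) * c := by
          calc (L * t) * c = t * (-a/2) := by rw [← e2]
            _ < c * (r - a) := hstep
            _ = (r - a) * c := by ring
        exact lt_of_mul_lt_mul_right h4 hc.le
      have h5 : L * (t - c₁) ≤ L * t :=
        mul_le_mul_of_nonneg_left (by linarith) hL0.le
      linarith
  -- integrability of G
  have hmaxint : Integrable (fun x : En n => max (⟪x, θ⟫ - c₁) 0) μ := by
    refine hmom.mono' (((continuous_id.inner continuous_const).sub
      continuous_const).max continuous_const).aestronglyMeasurable
      (Eventually.of_forall fun x => ?_)
    have h1 : |⟪x, θ⟫| ≤ ‖x‖ := by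
      have := abs_real_inner_le_norm x θ; rwa [hθ, mul_one] at this
    rw [Real.norm_eq_abs, abs_of_nonneg (le_max_right _ _)]
    rcases le_or_gt (⟪x, θ⟫ - c₁) 0 with h | h
    · rw [max_eq_right h]; exact norm_nonneg x
    · rw [max_eq_left h.le]
      obtain ⟨hl, hr⟩ := abs_le.mp h1
      linarith
  have hGint : Integrable G μ := (integrable_const a).add (hmaxint.const_mul L)
  have hGval : ∫ x, G x ∂μ = a + L * ∫ x, max (⟪x, θ⟫ - c₁) 0 ∂μ := by
    rw [hG, integral_add (integrable_const a) (hmaxint.const_mul L),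
      integral_const_mul]
    simp
  have hint2 : ∫ x, G x ∂μ ≤ ∫ x, (ψ x).toReal ∂μ :=
    integral_mono_ae hGint hint hGbound
  have hFθ : c₂ ≤ ∫ x, max (⟪x, θ⟫ - c₁) 0 ∂μ := hF θ hθ
  have hfin : (0:ℝ) < ∫ x, G x ∂μ := by
    rw [hGval]
    have h1 : L * c₂ ≤ L * ∫ x, max (⟪x, θ⟫ - c₁) 0 ∂μ :=
      mul_le_mul_of_nonneg_left hFθ hL0.le
    have e3 : L * (4 * c) = -(2 * a) := by linear_combination 2 * hL
    have h4 : L * (4 * c) ≤ L * c₂ := mul_le_mul_of_nonneg_left (by linarith) hL0.le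
    linarith
  linarith
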